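/- Suppose the shift-invariant probability measure ℙ on Ω = 𝒜^ℕ is ψ-mixing (i.e. ψ_0 < ∞ and ψ_m → 0 as m → ∞). Then there exists a constant Γ > 0 such that for every n ≥ 1 and every n-cylinder A ∈ 𝒞_n one has ℙ(A) ≤ e^{−Γ n}. -/

import Mathlib

open MeasureTheory Filter Set ProbabilityTheory
open scoped ENNReal

namespace Nonconv

variable {𝒜 : Type*} [MeasurableSpace 𝒜]

/-- The left shift `T` on the sequence space `ℕ → 𝒜`. -/
def shift : (ℕ → 𝒜) → ℕ → 𝒜 := fun ω i => ω (i + 1)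

/-- The `n`-cylinder `[a₀,…,a_{n-1}]` determined by the first `n` symbols of `a`. -/
def cyl (n : ℕ) (a : ℕ → 𝒜) : Set (ℕ → 𝒜) := {ω | ∀ i < n, ω i = a i}

/-- The sub-σ-algebra `ℱ_I` generated by the coordinates in `I`. -/
def coordSigma (I : Set ℕ) : MeasurableSpace (ℕ → 𝒜) :=
  ⨆ i ∈ I, MeasurableSpace.comap (fun ω => ω i) inferInstance

/-- The set of ratios `|μ(B∩C)/(μ(B)μ(C)) − 1|` over `B ∈ G`, `C ∈ H` with
`μ(B)μ(C) ≠ 0`. -/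
def psiSet (μ : Measure (ℕ → 𝒜)) (G H : MeasurableSpace (ℕ → 𝒜)) : Set ℝ :=
  {x | ∃ B C : Set (ℕ → 𝒜), MeasurableSet[G] B ∧ MeasurableSet[H] C ∧
    μ B ≠ 0 ∧ μ C ≠ 0 ∧
    x = |(μ (B ∩ C)).toReal / ((μ B).toReal * (μ C).toReal) - 1|}

/-- The ψ-dependence coefficient `ψ(G,H)`. -/
noncomputable def psi (μ : Measure (ℕ → 𝒜)) (G H : MeasurableSpace (ℕ → 𝒜)) : ℝ :=
  sSup (psiSet μ G H)

/-- The set whose supremum defines `ψ_m`. -/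
def psiMixSet (μ : Measure (ℕ → 𝒜)) (m : ℕ) : Set ℝ :=
  ⋃ n : ℕ, psiSet μ (coordSigma {i | i ≤ n}) (coordSigma {i | n + m + 1 ≤ i})

/-- The ψ-mixing coefficient `ψ_m = sup_n ψ(ℱ_{0,n}, ℱ_{n+m+1,∞})`. -/
noncomputable def psiMix (μ : Measure (ℕ → 𝒜)) (m : ℕ) : ℝ := sSup (psiMixSet μ m)

/-- `μ` is ψ-mixing: `ψ_0 < ∞` and `ψ_m → 0` as `m → ∞`. -/
def IsPsiMixing (μ : Measure (ℕ → 𝒜)) : Prop :=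
  BddAbove (psiMixSet μ 0) ∧ Tendsto (psiMix μ) atTop (nhds 0)

/-- `π(A)` for the cylinder `A = cyl n a`:
the minimal `k ∈ {1,…,n}` with `A ∩ T^{-k}A ≠ ∅`. -/
noncomputable def piCyl (n : ℕ) (a : ℕ → 𝒜) : ℕ :=
  sInf {k : ℕ | 1 ≤ k ∧ k ≤ n ∧ (cyl n a ∩ shift^[k] ⁻¹' cyl n a).Nonempty}

/-- Periodic extension of the string `a` with period `r`, so that
`cyl m (per r a)` is the cylinder `R^{m/r}` if `R = cyl r a`. -/
def per (r : ℕ) (a : ℕ → 𝒜) : ℕ → 𝒜 := fun i => a (i % r)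

/-- `κ = lcm { r / gcd(r, dᵢ) : 1 ≤ i ≤ ℓ }`. -/
def kap (ℓ : ℕ) (d : Fin ℓ → ℕ) (r : ℕ) : ℕ :=
  Finset.univ.lcm fun i => r / Nat.gcd r (d i)

/-- `ρ_A = ∏ᵢ ℙ(R^{(n+dᵢκ)/r} | A)` for `A = cyl n a`, `r = π(A)`, `R = A(π)`. -/
noncomputable def rho (μ : Measure (ℕ → 𝒜)) (ℓ : ℕ) (d : Fin ℓ → ℕ) (n : ℕ)
    (a : ℕ → 𝒜) : ℝ :=
  ∏ i : Fin ℓ,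
    (μ (cyl (n + d i * kap ℓ d (piCyl n a)) (per (piCyl n a) a) ∩ cyl n a)).toReal /
      (μ (cyl n a)).toReal

/-- The multiple recurrence event `{X_k^A = 1} = ∩ᵢ T^{-qᵢ(k)}A`. -/
def hitEvent (ℓ : ℕ) (q : Fin ℓ → ℕ → ℕ) (A : Set (ℕ → 𝒜)) (k : ℕ) : Set (ℕ → 𝒜) :=
  {ω | ∀ i : Fin ℓ, shift^[q i k] ω ∈ A}

/-- The nonconventional sum `S_N^A = ∑_{k=1}^N ∏ᵢ 1_A ∘ T^{qᵢ(k)}`. -/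
noncomputable def SN (ℓ : ℕ) (q : Fin ℓ → ℕ → ℕ) (A : Set (ℕ → 𝒜)) (N : ℕ)
    (ω : ℕ → 𝒜) : ℕ :=
  ∑ k ∈ Finset.Icc 1 N, Set.indicator (hitEvent ℓ q A k) (fun _ => 1) ω

/-- The probability a Poisson random variable with parameter `t` lies in `L`. -/
noncomputable def poissonProb (t : ℝ) (L : Set ℕ) : ℝ :=
  ∑' l : L, Real.exp (-t) * t ^ (l : ℕ) / Nat.factorial (l : ℕ)

/-- `℘(x) = x eˣ`. -/
noncomputable def wp (x : ℝ) : ℝ := x * Real.exp x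

/-- `g(n) = inf_{k ≥ n} min_{1 ≤ i ≤ ℓ-1} (q_{i+1}(k) − q_i(k))`, valued in `ℕ∞`. -/
noncomputable def gfun (ℓ : ℕ) (q : Fin ℓ → ℕ → ℕ) (n : ℕ) : ℕ∞ :=
  ⨅ (k : ℕ) (_ : n ≤ k) (i : Fin ℓ) (j : Fin ℓ) (_ : (i : ℕ) + 1 = (j : ℕ)),
    ((q j k - q i k : ℕ) : ℕ∞)

/-- `γ(n) = min {k ≥ 0 : g(k) ≥ 2n}`. -/
noncomputable def gam (ℓ : ℕ) (q : Fin ℓ → ℕ → ℕ) (n : ℕ) : ℕ :=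
  sInf {k : ℕ | ((2 * n : ℕ) : ℕ∞) ≤ gfun ℓ q k}

/-- The nonconventional hitting time
`τ_A(ω) = min {k ≥ 1 : ∏ᵢ 1_A(T^{dᵢk}ω) = 1}`, valued in `ℝ≥0∞` (equal to `∞` if no
such `k` exists). -/
noncomputable def tauA (ℓ : ℕ) (d : Fin ℓ → ℕ) (A : Set (ℕ → 𝒜)) (ω : ℕ → 𝒜) : ℝ≥0∞ :=
  sInf {x : ℝ≥0∞ | ∃ k : ℕ, 1 ≤ k ∧ (∀ i : Fin ℓ, shift^[d i * k] ω ∈ A) ∧ x = (k : ℝ≥0∞)}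

lemma shift_iterate_apply (t : ℕ) (ω : ℕ → 𝒜) (i : ℕ) :
    (shift^[t] ω) i = ω (i + t) := by
  induction t generalizing ω i with
  | zero => rfl
  | succ t ih => rw [Function.iterate_succ_apply, ih]; rfl

lemma coordSigma_mono {I J : Set ℕ} (h : I ⊆ J) :
    coordSigma (𝒜 := 𝒜) I ≤ coordSigma J := by
  refine iSup_le fun i => iSup_le fun hi => ?_
  exact le_iSup₂ (f := fun i (_ : i ∈ J) =>
    MeasurableSpace.comap (fun ω : ℕ → 𝒜 => ω i) inferInstance) i (h hi)

lemma measurableSet_eq_coord [MeasurableSingletonClass 𝒜] {I : Set ℕ} {t : ℕ}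
    (ht : t ∈ I) (c : 𝒜) :
    MeasurableSet[coordSigma I] {ω : ℕ → 𝒜 | ω t = c} := by
  have h1 : MeasurableSet[MeasurableSpace.comap (fun ω : ℕ → 𝒜 => ω t) inferInstance]
      {ω : ℕ → 𝒜 | ω t = c} := ⟨{c}, measurableSet_singleton c, rfl⟩
  exact le_iSup₂ (f := fun i (_ : i ∈ I) =>
    MeasurableSpace.comap (fun ω : ℕ → 𝒜 => ω i) inferInstance) t ht _ h1

lemma psiSet_mono {μ : Measure (ℕ → 𝒜)} {G G' H H' : MeasurableSpace (ℕ → 𝒜)}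
    (hG : G ≤ G') (hH : H ≤ H') : psiSet μ G H ⊆ psiSet μ G' H' := by
  rintro x ⟨B, C, hB, hC, hB0, hC0, hx⟩
  exact ⟨B, C, hG _ hB, hH _ hC, hB0, hC0, hx⟩

lemma psiMixSet_subset (μ : Measure (ℕ → 𝒜)) (m : ℕ) :
    psiMixSet μ m ⊆ psiMixSet μ 0 := by
  intro x hx
  obtain ⟨n, hn⟩ := mem_iUnion.mp hx
  refine mem_iUnion.mpr ⟨n + m, ?_⟩
  refine psiSet_mono (coordSigma_mono ?_) (coordSigma_mono ?_) hn
  · intro i hi; exact hi.trans (Nat.le_add_right n m)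
  · intro i hi; simpa using hi

/-- Lemma 3.1. If the shift-invariant probability measure `μ` on
`𝒜^ℕ` is ψ-mixing, then there is `Γ > 0` such that `μ(A) ≤ e^{-Γn}` for every
`n ≥ 1` and every `n`-cylinder `A`. -/
theorem exists_exponential_cylinder_bound
    [Countable 𝒜] [MeasurableSingletonClass 𝒜] [Nontrivial 𝒜]
    (μ : Measure (ℕ → 𝒜)) [IsProbabilityMeasure μ]
    (hinv : MeasurePreserving (shift : (ℕ → 𝒜) → ℕ → 𝒜) μ μ)
    (hpos : ∀ a : 𝒜, 0 < μ (cyl 1 fun _ => a))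
    (hmix : IsPsiMixing μ) :
    ∃ Γ : ℝ, 0 < Γ ∧ ∀ n : ℕ, 1 ≤ n → ∀ a : ℕ → 𝒜,
      μ (cyl n a) ≤ ENNReal.ofReal (Real.exp (-Γ * n)) := by
  classical
  obtain ⟨a0, b0, hab⟩ := exists_pair_ne 𝒜
  set p : 𝒜 → ℝ := fun c => (μ (cyl 1 fun _ => c)).toReal with hp_def
  have hp_pos : ∀ c, 0 < p c := fun c =>
    ENNReal.toReal_pos (hpos c).ne' (measure_ne_top μ _)
  -- one-coordinate cylinders
  have hcyl1 : ∀ c : 𝒜, (cyl 1 fun _ => c : Set (ℕ → 𝒜)) = {ω | ω 0 = c} := by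
    intro c; ext ω; simp [cyl, Nat.lt_one_iff]
  have hmeas0 : ∀ c : 𝒜, MeasurableSet {ω : ℕ → 𝒜 | ω 0 = c} := by
    intro c
    have h : {ω : ℕ → 𝒜 | ω 0 = c} = (fun ω : ℕ → 𝒜 => ω 0) ⁻¹' {c} := rfl
    rw [h]
    exact (measurable_pi_apply 0) (measurableSet_singleton c)
  have hcoord : ∀ (t : ℕ) (c : 𝒜), μ {ω : ℕ → 𝒜 | ω t = c} = μ (cyl 1 fun _ => c) := by
    intro t c
    have h1 : {ω : ℕ → 𝒜 | ω t = c} = shift^[t] ⁻¹' {ω | ω 0 = c} := by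
      ext ω; simp [shift_iterate_apply]
    rw [h1, (hinv.iterate t).measure_preimage (hmeas0 c).nullMeasurableSet, hcyl1]
  -- two distinct letters have small total mass
  have hsum : ∀ c b : 𝒜, c ≠ b → p c + p b ≤ 1 := by
    intro c b hcb
    have hdisj : Disjoint (cyl 1 fun _ => c : Set (ℕ → 𝒜)) (cyl 1 fun _ => b) := by
      rw [hcyl1, hcyl1]
      refine Set.disjoint_left.mpr fun ω h1 h2 => hcb ?_
      rw [← h1, ← h2]
    have hB : MeasurableSet (cyl 1 fun _ => b : Set (ℕ → 𝒜)) := by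
      rw [hcyl1]; exact hmeas0 b
    have hle : μ (cyl 1 fun _ => c) + μ (cyl 1 fun _ => b) ≤ 1 := by
      rw [← measure_union hdisj hB]
      exact prob_le_one
    have := ENNReal.toReal_mono (by norm_num) hle
    rwa [ENNReal.toReal_add (measure_ne_top μ _) (measure_ne_top μ _),
      ENNReal.toReal_one] at this
  set δ : ℝ := 1 - min (p a0) (p b0) with hδ_def
  have hδ1 : δ < 1 := by
    have := lt_min (hp_pos a0) (hp_pos b0); simp only [hδ_def]; linarith
  have hpδ : ∀ c, p c ≤ δ := by
    intro c
    by_cases hc : c = a0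
    · have := hsum a0 b0 hab
      have h2 : min (p a0) (p b0) ≤ p b0 := min_le_right _ _
      rw [hc]; simp only [hδ_def]; linarith
    · have := hsum c a0 hc
      have h2 : min (p a0) (p b0) ≤ p a0 := min_le_left _ _
      simp only [hδ_def]; linarith
  have hδ0 : 0 < δ := lt_of_lt_of_le (hp_pos a0) (hpδ a0)
  set θ : ℝ := (1 + δ) / 2 with hθ_def
  have hθ0 : 0 < θ := by simp only [hθ_def]; linarith
  have hθ1 : θ < 1 := by simp only [hθ_def]; linarith
  have hδθ : δ ≤ θ := by simp only [hθ_def]; linarith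
  set ε : ℝ := (1 - δ) / 2 with hε_def
  have hε0 : 0 < ε := by simp only [hε_def]; linarith
  -- choose the gap m
  obtain ⟨m, hm⟩ : ∃ m, psiMix μ m < ε :=
    (hmix.2.eventually (gt_mem_nhds hε0)).exists
  have hbdd : BddAbove (psiMixSet μ m) := hmix.1.mono (psiMixSet_subset μ m)
  -- key ψ-mixing estimate
  have hkey : ∀ (nn : ℕ) (B C : Set (ℕ → 𝒜)),
      MeasurableSet[coordSigma {i | i ≤ nn}] B →
      MeasurableSet[coordSigma {i | nn + m + 1 ≤ i}] C →
      (μ (B ∩ C)).toReal ≤ (1 + ε) * ((μ B).toReal * (μ C).toReal) := by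
    intro nn B C hBm hCm
    by_cases hB : μ B = 0
    · have : μ (B ∩ C) = 0 := le_antisymm (hB ▸ measure_mono Set.inter_subset_left)
        zero_le
      rw [this]
      positivity
    by_cases hC : μ C = 0
    · have : μ (B ∩ C) = 0 := le_antisymm (hC ▸ measure_mono Set.inter_subset_right)
        zero_le
      rw [this]
      positivity
    have hpB : 0 < (μ B).toReal := ENNReal.toReal_pos hB (measure_ne_top μ _)
    have hpC : 0 < (μ C).toReal := ENNReal.toReal_pos hC (measure_ne_top μ _)
    have hx : |(μ (B ∩ C)).toReal / ((μ B).toReal * (μ C).toReal) - 1| ∈ psiMixSet μ m :=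
      mem_iUnion.mpr ⟨nn, B, C, hBm, hCm, hB, hC, rfl⟩
    have hle : |(μ (B ∩ C)).toReal / ((μ B).toReal * (μ C).toReal) - 1| ≤ psiMix μ m :=
      le_csSup hbdd hx
    have h2 : (μ (B ∩ C)).toReal / ((μ B).toReal * (μ C).toReal) - 1 < ε :=
      lt_of_le_of_lt (le_trans (le_abs_self _) hle) hm
    have h3 : (μ (B ∩ C)).toReal / ((μ B).toReal * (μ C).toReal) < 1 + ε := by linarith
    have h4 := (div_lt_iff₀ (mul_pos hpB hpC)).mp h3
    linarith
  -- the constant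
  refine ⟨(-Real.log θ) / (m + 1), div_pos (neg_pos.mpr (Real.log_neg hθ0 hθ1))
    (by positivity), ?_⟩
  intro n hn a
  -- the skeleton events
  set E : ℕ → Set (ℕ → 𝒜) := fun j => {ω | ω (j * (m + 1)) = a (j * (m + 1))} with hE_def
  have hEδ : ∀ j, (μ (E j)).toReal ≤ δ := by
    intro j
    have : μ (E j) = μ (cyl 1 fun _ => a (j * (m + 1))) := hcoord _ _
    rw [hE_def]
    simp only []
    rw [this]
    exact hpδ _
  -- the induction
  have hind : ∀ k s : ℕ, (μ (⋂ j ∈ Finset.Ico s (s + k), E j)).toReal ≤ θ ^ k := by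
    intro k
    induction k with
    | zero =>
      intro s
      simp [measure_univ]
    | succ k ih =>
      intro s
      have hsplit : (⋂ j ∈ Finset.Ico s (s + (k + 1)), E j)
          = E s ∩ ⋂ j ∈ Finset.Ico (s + 1) ((s + 1) + k), E j := by
        ext ω
        simp only [Set.mem_iInter, Set.mem_inter_iff, Finset.mem_Ico]
        constructor
        · intro h
          exact ⟨h s ⟨le_refl s, by omega⟩, fun j hj => h j ⟨by omega, by omega⟩⟩
        · rintro ⟨h1, h2⟩ j hj
          rcases eq_or_lt_of_le hj.1 with h | h
          · rwa [← h]
          · exact h2 j ⟨h, by omega⟩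
      have hBm : MeasurableSet[coordSigma {i | i ≤ s * (m + 1)}] (E s) :=
        measurableSet_eq_coord (by simp) _
      have hCm : MeasurableSet[coordSigma {i | s * (m + 1) + m + 1 ≤ i}]
          (⋂ j ∈ Finset.Ico (s + 1) ((s + 1) + k), E j) := by
        refine MeasurableSet.iInter fun j => MeasurableSet.iInter fun hj => ?_
        refine measurableSet_eq_coord ?_ _
        have hj1 : s + 1 ≤ j := (Finset.mem_Ico.mp hj).1
        have h2 : (s + 1) * (m + 1) ≤ j * (m + 1) := Nat.mul_le_mul_right _ hj1
        have h3 : (s + 1) * (m + 1) = s * (m + 1) + m + 1 := by ring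
        simp only [Set.mem_setOf_eq]
        omega
      rw [hsplit]
      calc (μ (E s ∩ ⋂ j ∈ Finset.Ico (s + 1) ((s + 1) + k), E j)).toReal
          ≤ (1 + ε) * ((μ (E s)).toReal *
            (μ (⋂ j ∈ Finset.Ico (s + 1) ((s + 1) + k), E j)).toReal) :=
            hkey _ _ _ hBm hCm
        _ ≤ (1 + ε) * (δ * θ ^ k) := by
            have h1 := hEδ s
            have h2 := ih (s + 1)
            have h3 : (0:ℝ) ≤ (μ (E s)).toReal := ENNReal.toReal_nonneg
            have h4 : (0:ℝ) ≤ (μ (⋂ j ∈ Finset.Ico (s + 1) ((s + 1) + k), E j)).toReal :=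
              ENNReal.toReal_nonneg
            have h5 : (0:ℝ) ≤ 1 + ε := by linarith
            exact mul_le_mul_of_nonneg_left
              (mul_le_mul h1 h2 h4 (le_trans h3 h1)) h5
        _ ≤ θ ^ (k + 1) := by
            rw [pow_succ]
            have hθk : (0:ℝ) ≤ θ ^ k := le_of_lt (pow_pos hθ0 k)
            have : (1 + ε) * δ ≤ θ := by
              simp only [hε_def, hθ_def]; nlinarith
            calc (1 + ε) * (δ * θ ^ k) = ((1 + ε) * δ) * θ ^ k := by ring
              _ ≤ θ * θ ^ k := mul_le_mul_of_nonneg_right this hθk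
              _ = θ ^ k * θ := by ring
  -- number of skeleton coordinates
  set K : ℕ := (n - 1) / (m + 1) + 1 with hK_def
  have hsub2 : cyl n a ⊆ ⋂ j ∈ Finset.Ico 0 (0 + K), E j := by
    intro ω hω
    simp only [Set.mem_iInter, Finset.mem_Ico]
    intro j hj
    have hj2 : j ≤ (n - 1) / (m + 1) := by omega
    have h4 := (Nat.le_div_iff_mul_le (show 0 < m + 1 by omega)).mp hj2
    exact hω _ (by omega)
  have hnK : n ≤ K * (m + 1) := by
    have h1 := Nat.div_add_mod (n - 1) (m + 1)
    have h2 := Nat.mod_lt (n - 1) (show 0 < m + 1 by omega)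
    have h3 : ((n - 1) / (m + 1) + 1) * (m + 1)
        = (m + 1) * ((n - 1) / (m + 1)) + (m + 1) := by ring
    simp only [hK_def]
    omega
  -- the exponential bound
  have hL : Real.log θ < 0 := Real.log_neg hθ0 hθ1
  have hexp : θ ^ K ≤ Real.exp (-((-Real.log θ) / (m + 1)) * n) := by
    have h1 : θ ^ K = Real.exp ((K : ℝ) * Real.log θ) := by
      rw [Real.exp_nat_mul, Real.exp_log hθ0]
    rw [h1]
    apply Real.exp_le_exp.mpr
    have hm1 : (0:ℝ) < (m : ℝ) + 1 := by positivity
    have h2 : (n : ℝ) ≤ (K : ℝ) * ((m : ℝ) + 1) := by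
      have := hnK
      push_cast
      exact_mod_cast Nat.cast_le.mpr this
    have h3 : (n : ℝ) / ((m : ℝ) + 1) ≤ (K : ℝ) := (div_le_iff₀ hm1).mpr h2
    have h4 : (K : ℝ) * Real.log θ ≤ ((n : ℝ) / ((m : ℝ) + 1)) * Real.log θ :=
      mul_le_mul_of_nonpos_right h3 (le_of_lt hL)
    calc (K : ℝ) * Real.log θ ≤ ((n : ℝ) / ((m : ℝ) + 1)) * Real.log θ := h4
      _ = -((-Real.log θ) / ((m : ℝ) + 1)) * (n : ℝ) := by ring
  calc μ (cyl n a) ≤ μ (⋂ j ∈ Finset.Ico 0 (0 + K), E j) := measure_mono hsub2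
    _ = ENNReal.ofReal ((μ (⋂ j ∈ Finset.Ico 0 (0 + K), E j)).toReal) :=
        (ENNReal.ofReal_toReal (measure_ne_top μ _)).symm
    _ ≤ ENNReal.ofReal (Real.exp (-((-Real.log θ) / (m + 1)) * n)) :=
        ENNReal.ofReal_le_ofReal ((hind K 0).trans hexp)

end Nonconv
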